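/- Let f : ℝ^{m×n} → ℝ be convex and differentiable with gradient ∇f and L-smooth, let h : ℝ^{m×n} → ℝ be convex, and set F = f + h. Let U ∈ ℝ^{m×m} be symmetric, let x*, λ* ∈ ℝ^{m×n} with Ux* = 0, and let θ ∈ [0,1]. For x, x⁺, y ∈ ℝ^{m×n}, define x̃ = (1 − θ)x + θx*, ρ = F(x) − F(x*) + ⟨λ*, Ux⟩, and ρ⁺ = F(x⁺) − F(x*) + ⟨λ*, Ux⁺⟩. Then ρ⁺ − (1 − θ)ρ ≤ ⟨∇f(y), x⁺ − x̃⟩ + (L/2)‖x⁺ − y‖²_F + h(x⁺) − h(x̃) + ⟨λ*, U(x⁺ − x̃)⟩. -/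

import Mathlib

open scoped RealInnerProductSpace

/-- Left multiplication of `x ∈ ℝ^{m×n}` by an `m × m` matrix `A`,
with `ℝ^{m×n}` viewed as a Euclidean space with the Frobenius inner product. -/
noncomputable def matApply {m n : ℕ} (A : Matrix (Fin m) (Fin m) ℝ)
    (x : EuclideanSpace ℝ (Fin m × Fin n)) : EuclideanSpace ℝ (Fin m × Fin n) :=
  WithLp.toLp 2 (fun p : Fin m × Fin n => ∑ k : Fin m, A p.1 k * x (k, p.2))

lemma matApply_add {m n : ℕ} (A : Matrix (Fin m) (Fin m) ℝ)
    (a b : EuclideanSpace ℝ (Fin m × Fin n)) :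
    matApply A (a + b) = matApply A a + matApply A b := by
  ext p
  simp [matApply, mul_add, Finset.sum_add_distrib]

lemma matApply_smul {m n : ℕ} (A : Matrix (Fin m) (Fin m) ℝ) (c : ℝ)
    (a : EuclideanSpace ℝ (Fin m × Fin n)) :
    matApply A (c • a) = c • matApply A a := by
  ext p
  simp [matApply, Finset.mul_sum]
  congr 1; funext k; ring

lemma matApply_sub {m n : ℕ} (A : Matrix (Fin m) (Fin m) ℝ)
    (a b : EuclideanSpace ℝ (Fin m × Fin n)) :
    matApply A (a - b) = matApply A a - matApply A b := by
  ext p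
  simp [matApply, mul_sub, Finset.sum_sub_distrib]

theorem stmt15 (m n : ℕ) (L : ℝ)
    (f h : EuclideanSpace ℝ (Fin m × Fin n) → ℝ)
    (gf : EuclideanSpace ℝ (Fin m × Fin n) → EuclideanSpace ℝ (Fin m × Fin n))
    -- `f` is convex with gradient `gf`
    (hconv : ∀ a b, f a + ⟪gf a, b - a⟫ ≤ f b)
    -- `f` is `L`-smooth with gradient `gf`
    (hsmooth : ∀ a b, f b ≤ f a + ⟪gf a, b - a⟫ + (L / 2) * ‖b - a‖ ^ 2)
    (hh : ConvexOn ℝ Set.univ h)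
    (U : Matrix (Fin m) (Fin m) ℝ) (hU : U.IsSymm)
    (xs lam : EuclideanSpace ℝ (Fin m × Fin n)) (hxs : matApply U xs = 0)
    (θ : ℝ) (hθ0 : 0 ≤ θ) (hθ1 : θ ≤ 1)
    (x xp y xtilde : EuclideanSpace ℝ (Fin m × Fin n))
    (hxt : xtilde = (1 - θ) • x + θ • xs)
    (ρ ρp : ℝ)
    (hρ : ρ = (f x + h x) - (f xs + h xs) + ⟪lam, matApply U x⟫)
    (hρp : ρp = (f xp + h xp) - (f xs + h xs) + ⟪lam, matApply U xp⟫) :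
    ρp - (1 - θ) * ρ ≤ ⟪gf y, xp - xtilde⟫ + (L / 2) * ‖xp - y‖ ^ 2
      + h xp - h xtilde + ⟪lam, matApply U (xp - xtilde)⟫ := by
  have hθ1' : (0:ℝ) ≤ 1 - θ := by linarith
  -- linear functional g z = ⟪lam, matApply U z⟫
  have hUxt : matApply U xtilde = (1 - θ) • matApply U x := by
    rw [hxt, matApply_add, matApply_smul, matApply_smul, hxs, smul_zero, add_zero]
  have hinner_xt : ⟪lam, matApply U xtilde⟫ = (1 - θ) * ⟪lam, matApply U x⟫ := by
    rw [hUxt, real_inner_smul_right]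
  have hinner_sub : ⟪lam, matApply U (xp - xtilde)⟫
      = ⟪lam, matApply U xp⟫ - ⟪lam, matApply U xtilde⟫ := by
    rw [matApply_sub, inner_sub_right]
  -- smoothness + convexity at y
  have hA := hsmooth y xp
  have hB := hconv y xtilde
  have hinner_split : ⟪gf y, xp - y⟫ - ⟪gf y, xtilde - y⟫ = ⟪gf y, xp - xtilde⟫ := by
    rw [← inner_sub_right]
    congr 1
    abel
  -- convexity of f at xtilde
  have hC : f xtilde ≤ (1 - θ) * f x + θ * f xs := by
    have h1 := hconv xtilde x
    have h2 := hconv xtilde xs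
    have hz : (1 - θ) • (x - xtilde) + θ • (xs - xtilde) = 0 := by
      rw [hxt]
      module
    have hz' : (1 - θ) * ⟪gf xtilde, x - xtilde⟫ + θ * ⟪gf xtilde, xs - xtilde⟫ = 0 := by
      rw [← real_inner_smul_right, ← real_inner_smul_right, ← inner_add_right, hz,
        inner_zero_right]
    nlinarith [mul_le_mul_of_nonneg_left h1 hθ1', mul_le_mul_of_nonneg_left h2 hθ0]
  -- convexity of h
  have hD : h xtilde ≤ (1 - θ) * h x + θ * h xs := by
    have := hh.2 (Set.mem_univ x) (Set.mem_univ xs) hθ1' hθ0 (by ring)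
    rwa [← hxt] at this
  rw [hρ, hρp, hinner_sub, hinner_xt] at *
  nlinarith [hA, hB, hC, hD, hinner_split]
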